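/- Let F_q be a finite field, E a field extension of F_q of degree m, ρ : E → Mat_{m×m}(F_q) the regular representation (a ↦ matrix of multiplication by a), n₁n₂ = n, and Φ₂ : E^n → (n₁m × n₂m matrices over F_q) the induced two-dimensional expansion. Let 0 < k < n and ℓ ≥ 1, set t = ⌊(n−k)/(2ℓ)⌋ and assume t ≥ 1, and let C ⊆ E^n have minimum Hamming distance at least n−k+1. Then Φ₂(C) corrects any ℓ one-dimensional bursts of length at most m(t−1)+1 each: for all c, c′ ∈ C and all e, e′ whose supports are each covered by a union of ℓ sets, each lying in a single row within m(t−1)+1 contiguous columns or in a single column within m(t−1)+1 contiguous rows, Φ₂(c) + e = Φ₂(c′) + e′ implies c = c′. -/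

import Mathlib

/-- The linear (row-major) index of position `j` in the `i`-th block of length `m`. -/
def finIdx {n m : ℕ} (i : Fin n) (j : Fin m) : Fin (n * m) :=
  ⟨i.1 * m + j.1, by
    have h1 : i.1 + 1 ≤ n := i.2
    have h2 : j.1 < m := j.2
    calc i.1 * m + j.1 < (i.1 + 1) * m := by nlinarith
      _ ≤ n * m := Nat.mul_le_mul_right m h1⟩

/-- `ℓ` one-dimensional bursts of length (at most) `L` each: the support of the
matrix is covered by a union of `ℓ` sets, each lying in a single row within `L`
contiguous columns (when `dir t = true`) or in a single column within `L`
contiguous rows (when `dir t = false`). -/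
def IsLineBurstUnion {F : Type*} [Zero F] {R C : ℕ} (ℓ L : ℕ)
    (e : Matrix (Fin R) (Fin C) F) : Prop :=
  ∃ (dir : Fin ℓ → Bool) (r p : Fin ℓ → ℕ), ∀ i j, e i j ≠ 0 → ∃ t : Fin ℓ,
    cond (dir t)
      ((i : ℕ) = r t ∧ p t ≤ (j : ℕ) ∧ (j : ℕ) < p t + L)
      ((j : ℕ) = r t ∧ p t ≤ (i : ℕ) ∧ (i : ℕ) < p t + L)

/-- The two-dimensional expansion via the regular representation
`ρ : E → Mat_{m×m}(F)` of a code `C ⊆ E^n` of minimum distance at least `n - k + 1`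
corrects any `ℓ` one-dimensional bursts of length at most `m(t-1)+1` each, where
`t = ⌊(n-k)/(2ℓ)⌋ ≥ 1`. -/
theorem regular_expansion_corrects_multiple_line_bursts
    {F E : Type*} [Field F] [Fintype F] [DecidableEq F]
    [Field E] [Algebra F E] [DecidableEq E]
    (m n n₁ n₂ k ℓ t : ℕ) (b : Module.Basis (Fin m) F E)
    (ρ : E → Matrix (Fin m) (Fin m) F)
    (hρ : ρ = fun a => LinearMap.toMatrix b b (LinearMap.mulLeft F a))
    (hn₁ : 0 < n₁) (hn₂ : 0 < n₂) (hn : n₁ * n₂ = n)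
    (Φ₂ : (Fin n → E) → Matrix (Fin (n₁ * m)) (Fin (n₂ * m)) F)
    (hΦ : ∀ (x : Fin n → E) (r : Fin n₁) (c : Fin n₂) (u v : Fin m),
      Φ₂ x (finIdx r u) (finIdx c v) = ρ (x (Fin.cast hn (finIdx r c))) u v)
    (hk : 0 < k) (hkn : k < n) (hℓ : 1 ≤ ℓ) (ht : t = (n - k) / (2 * ℓ)) (ht1 : 1 ≤ t)
    (C : Set (Fin n → E))
    (hC : ∀ c ∈ C, ∀ c' ∈ C, c ≠ c' → n - k + 1 ≤ hammingDist c c') :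
    ∀ c ∈ C, ∀ c' ∈ C, ∀ e e' : Matrix (Fin (n₁ * m)) (Fin (n₂ * m)) F,
      IsLineBurstUnion ℓ (m * (t - 1) + 1) e → IsLineBurstUnion ℓ (m * (t - 1) + 1) e' →
      Φ₂ c + e = Φ₂ c' + e' → c = c' := by

  intro c hc c' hc' e e' hBe hBe' heq
  by_contra hne
  classical
  obtain ⟨dir, rr, pp, hE⟩ := hBe
  obtain ⟨dir', rr', pp', hE'⟩ := hBe'
  set D : Finset (Fin n) := Finset.univ.filter (fun j => c j ≠ c' j) with hD
  set P : Fin n → Bool × Fin ℓ × Fin t → Prop := fun j x =>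
    cond ((if x.1 then dir' else dir) x.2.1)
      ((j : ℕ) / n₂ = (if x.1 then rr' else rr) x.2.1 / m ∧
        (j : ℕ) % n₂ = (x.2.2 : ℕ) + (if x.1 then pp' else pp) x.2.1 / m)
      ((j : ℕ) % n₂ = (if x.1 then rr' else rr) x.2.1 / m ∧
        (j : ℕ) / n₂ = (x.2.2 : ℕ) + (if x.1 then pp' else pp) x.2.1 / m) with hP
  have key : ∀ j ∈ D, ∃ x : Bool × Fin ℓ × Fin t, P j x := by
    intro j hj
    have hj' : c j ≠ c' j := by simpa [hD] using hj
    have hjlt : (j : ℕ) < n₁ * n₂ := by rw [hn]; exact j.2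
    set rj : Fin n₁ := ⟨(j : ℕ) / n₂, Nat.div_lt_of_lt_mul (by rwa [mul_comm] at hjlt)⟩
      with hrj
    set cj : Fin n₂ := ⟨(j : ℕ) % n₂, Nat.mod_lt _ hn₂⟩ with hcj
    have hjdec : Fin.cast hn (finIdx rj cj) = j := by
      apply Fin.ext
      simp only [Fin.coe_cast, finIdx, hrj, hcj]
      rw [mul_comm]
      exact Nat.div_add_mod _ _
    have ha : c j - c' j ≠ 0 := sub_ne_zero.mpr hj'
    have hρa : ρ (c j - c' j) ≠ 0 := by
      rw [hρ]
      intro h0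
      have h1 : LinearMap.mulLeft F (c j - c' j) = 0 :=
        (LinearMap.toMatrix b b).map_eq_zero_iff.mp h0
      have h2 : (c j - c' j) * 1 = 0 := by
        have := congrArg (fun f => f 1) h1
        simpa [LinearMap.mulLeft_apply] using this
      exact ha (by simpa using h2)
    obtain ⟨u, v, huv⟩ : ∃ u v : Fin m, ρ (c j - c' j) u v ≠ 0 := by
      by_contra hcon
      push_neg at hcon
      exact hρa (by ext u v; simpa using hcon u v)
    have hm : 0 < m := lt_of_le_of_lt (Nat.zero_le u.1) u.2
    have hent : Φ₂ c (finIdx rj u) (finIdx cj v) - Φ₂ c' (finIdx rj u) (finIdx cj v)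
        = ρ (c j - c' j) u v := by
      rw [hΦ, hΦ, hjdec, hρ]
      simp [LinearMap.toMatrix_apply, LinearMap.mulLeft_apply, sub_mul]
    set X := finIdx rj u with hX
    set Y := finIdx cj v with hY
    have hXv : (X : ℕ) = (j : ℕ) / n₂ * m + (u : ℕ) := rfl
    have hYv : (Y : ℕ) = (j : ℕ) % n₂ * m + (v : ℕ) := rfl
    have hXdiv : (X : ℕ) / m = (j : ℕ) / n₂ := by
      rw [hXv, mul_comm, Nat.mul_add_div hm, Nat.div_eq_of_lt u.2, Nat.add_zero]
    have hYdiv : (Y : ℕ) / m = (j : ℕ) % n₂ := by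
      rw [hYv, mul_comm, Nat.mul_add_div hm, Nat.div_eq_of_lt v.2, Nat.add_zero]
    have hdiff : e' X Y - e X Y ≠ 0 := by
      have h3 := congrFun (congrFun heq X) Y
      simp only [Matrix.add_apply] at h3
      intro h0
      apply huv
      rw [← hent]
      have h4 : Φ₂ c X Y - Φ₂ c' X Y = e' X Y - e X Y := by linear_combination h3
      rw [h4, h0]
    have main : ∀ (dd : Fin ℓ → Bool) (r0 p0 : Fin ℓ → ℕ) (i : Fin ℓ),
        (cond (dd i) ((X : ℕ) = r0 i ∧ p0 i ≤ (Y : ℕ) ∧ (Y : ℕ) < p0 i + (m * (t-1) + 1))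
          ((Y : ℕ) = r0 i ∧ p0 i ≤ (X : ℕ) ∧ (X : ℕ) < p0 i + (m * (t-1) + 1))) →
        ∃ q : Fin t, cond (dd i)
          ((j : ℕ) / n₂ = r0 i / m ∧ (j : ℕ) % n₂ = (q : ℕ) + p0 i / m)
          ((j : ℕ) % n₂ = r0 i / m ∧ (j : ℕ) / n₂ = (q : ℕ) + p0 i / m) := by
      intro dd r0 p0 i hcond
      cases hdd : dd i with
      | true =>
        rw [hdd] at hcond
        simp only [cond_true] at hcond ⊢
        obtain ⟨hx, hy1, hy2⟩ := hcond
        have hr : r0 i / m = (j : ℕ) / n₂ := by rw [← hx, hXdiv]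
        have h1 : p0 i / m ≤ (j : ℕ) % n₂ := hYdiv ▸ Nat.div_le_div_right hy1
        have h2 : (j : ℕ) % n₂ ≤ p0 i / m + (t - 1) :=
          calc (j : ℕ) % n₂ = (Y : ℕ) / m := hYdiv.symm
            _ ≤ (p0 i + m * (t - 1)) / m := Nat.div_le_div_right (by omega)
            _ = p0 i / m + (t - 1) := by rw [mul_comm m (t - 1), Nat.add_mul_div_right _ _ hm]
        refine ⟨⟨(j : ℕ) % n₂ - p0 i / m, by omega⟩, hr.symm, ?_⟩
        simp only [Fin.val_mk]
        omega
      | false =>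
        rw [hdd] at hcond
        simp only [cond_false] at hcond ⊢
        obtain ⟨hx, hy1, hy2⟩ := hcond
        have hr : r0 i / m = (j : ℕ) % n₂ := by rw [← hx, hYdiv]
        have h1 : p0 i / m ≤ (j : ℕ) / n₂ := hXdiv ▸ Nat.div_le_div_right hy1
        have h2 : (j : ℕ) / n₂ ≤ p0 i / m + (t - 1) :=
          calc (j : ℕ) / n₂ = (X : ℕ) / m := hXdiv.symm
            _ ≤ (p0 i + m * (t - 1)) / m := Nat.div_le_div_right (by omega)
            _ = p0 i / m + (t - 1) := by rw [mul_comm m (t - 1), Nat.add_mul_div_right _ _ hm]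
        refine ⟨⟨(j : ℕ) / n₂ - p0 i / m, by omega⟩, hr.symm, ?_⟩
        simp only [Fin.val_mk]
        omega
    by_cases he : e X Y ≠ 0
    · obtain ⟨i, hi⟩ := hE X Y he
      obtain ⟨q, hq⟩ := main dir rr pp i hi
      exact ⟨(false, i, q), by simpa [hP] using hq⟩
    · push_neg at he
      have he' : e' X Y ≠ 0 := by intro h0; rw [h0, he] at hdiff; simp at hdiff
      obtain ⟨i, hi⟩ := hE' X Y he'
      obtain ⟨q, hq⟩ := main dir' rr' pp' i hi
      exact ⟨(true, i, q), by simpa [hP] using hq⟩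
  set f : Fin n → Bool × Fin ℓ × Fin t := fun j =>
    if h : j ∈ D then (key j h).choose else (false, ⟨0, hℓ⟩, ⟨0, ht1⟩) with hf
  have hfspec : ∀ j ∈ D, P j (f j) := by
    intro j hj
    simp only [hf, dif_pos hj]
    exact (key j hj).choose_spec
  have hinj : Set.InjOn f D := by
    intro j hj j' hj' hff
    have p1 := hfspec j hj
    have p2 := hfspec j' hj'
    rw [hff] at p1
    simp only [hP] at p1 p2
    have hdm : (j : ℕ) / n₂ = (j' : ℕ) / n₂ ∧ (j : ℕ) % n₂ = (j' : ℕ) % n₂ := by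
      cases hdd : (if (f j').1 then dir' else dir) (f j').2.1 with
      | true =>
        rw [hdd] at p1 p2
        simp only [cond_true] at p1 p2
        exact ⟨p1.1.trans p2.1.symm, p1.2.trans p2.2.symm⟩
      | false =>
        rw [hdd] at p1 p2
        simp only [cond_false] at p1 p2
        exact ⟨p1.2.trans p2.2.symm, p1.1.trans p2.1.symm⟩
    apply Fin.ext
    conv_lhs => rw [← Nat.div_add_mod (j : ℕ) n₂]
    conv_rhs => rw [← Nat.div_add_mod (j' : ℕ) n₂]
    rw [hdm.1, hdm.2]
  have hcard : D.card ≤ 2 * (ℓ * t) := by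
    have := Finset.card_le_card_of_injOn f (fun x _ => Finset.mem_univ (f x)) hinj
    simpa [Fintype.card_prod] using this
  have hdist : hammingDist c c' = D.card := rfl
  have hlow := hC c hc c' hc' hne
  have hmul : 2 * (ℓ * t) ≤ n - k := by
    subst ht
    calc 2 * (ℓ * ((n - k) / (2 * ℓ))) = (n - k) / (2 * ℓ) * (2 * ℓ) := by ring
      _ ≤ n - k := Nat.div_mul_le_self _ _
  omega
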